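/- Let s = diag(μ₁·I_{n₁},…,μ_m·I_{n_m}, I_n, μ_m^{-1}·I_{n_m},…,μ₁^{-1}·I_{n₁}) be a noncentral semisimple element of SO_{2ℓ+1}(k) (char k ≠ 2, ℓ ≥ 3, μ_i ≠ μ_j^{±1} for i<j, μ_i ≠ 1, n + 2Σn_i = 2ℓ+1). Then every eigenspace of s on Λ²(k^{2ℓ+1}) has dimension at most 2ℓ² − ℓ, with equality only for eigenvalue 1 and s (up to conjugation) of the form diag(−1,…,−1,1,−1,…,−1). -/

import Mathlib

open TensorProduct

/-- The submodule of `W ⊗ W` spanned by the squares `x ⊗ x`; the quotient by it is the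
exterior square `Λ²(W)`. -/
noncomputable def sqT (k W : Type*) [Field k] [AddCommGroup W] [Module k W] :
    Submodule k (W ⊗[k] W) :=
  Submodule.span k {z | ∃ x : W, z = x ⊗ₜ[k] x}

/-- The endomorphism of `Λ²(W) = (W ⊗ W)/⟨x ⊗ x⟩` induced by an endomorphism of `W`. -/
noncomputable def extSqMap {k W : Type*} [Field k] [AddCommGroup W] [Module k W]
    (u : W →ₗ[k] W) : ((W ⊗[k] W) ⧸ sqT k W) →ₗ[k] ((W ⊗[k] W) ⧸ sqT k W) :=
  Submodule.mapQ _ _ (TensorProduct.map u u)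
    (Submodule.span_le.mpr (by
      rintro _ ⟨x, rfl⟩
      simp only [SetLike.mem_coe, Submodule.mem_comap, TensorProduct.map_tmul]
      exact Submodule.subset_span ⟨u x, rfl⟩))


open Module

set_option linter.unusedSectionVars false
set_option maxHeartbeats 1000000

section Part1

lemma eigenspace_diag {k V : Type*} [Field k] [AddCommGroup V] [Module k V]
    {ι : Type*} [Fintype ι] [DecidableEq ι] (B : Basis ι k V) (f : V →ₗ[k] V)
    (d : ι → k) (h : ∀ i, f (B i) = d i • B i) (μ0 : k) :
    Module.End.eigenspace f μ0 = Submodule.span k (B '' {i | d i = μ0}) := by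
  have h1 : ∀ v : V, f v = ∑ j, (B.repr v j * d j) • B j := by
    intro v
    conv_lhs => rw [← B.sum_repr v]
    rw [map_sum]
    simp_rw [map_smul, h, smul_smul]
  have h2 : ∀ v : V, (μ0:k) • v = ∑ j, (μ0 * B.repr v j) • B j := by
    intro v
    conv_lhs => rw [← B.sum_repr v]
    rw [Finset.smul_sum]
    simp_rw [smul_smul]
  ext v
  rw [Module.End.mem_eigenspace_iff, Basis.mem_span_image]
  constructor
  · intro hv i hi
    simp only [Set.mem_setOf_eq]
    by_contra hdi
    rw [h1, h2] at hv
    have hj := congrArg (fun w => B.repr w i) hv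
    simp only [map_sum, map_smul, Finsupp.coe_finset_sum, Finset.sum_apply,
      Finsupp.smul_apply, B.repr_self, Finsupp.single_apply, smul_eq_mul,
      mul_ite, mul_one, mul_zero, Finset.sum_ite_eq', Finset.mem_univ, if_true] at hj
    have hri : B.repr v i ≠ 0 := Finsupp.mem_support_iff.mp hi
    have hz : B.repr v i * (d i - μ0) = 0 := by linear_combination hj
    rcases mul_eq_zero.mp hz with h' | h'
    · exact hri h'
    · exact hdi (sub_eq_zero.mp h')
  · intro hsupp
    rw [h1, h2]
    apply Finset.sum_congr rfl
    intro j _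
    congr 1
    by_cases hj : B.repr v j = 0
    · rw [hj]; ring
    · have : d j = μ0 := hsupp (Finsupp.mem_support_iff.mpr hj)
      rw [this]; ring

lemma finrank_eigenspace_diag {k V : Type*} [Field k] [AddCommGroup V] [Module k V]
    {ι : Type*} [Fintype ι] [DecidableEq ι] (B : Basis ι k V) (f : V →ₗ[k] V)
    (d : ι → k) (h : ∀ i, f (B i) = d i • B i) (μ0 : k) [DecidablePred fun i => d i = μ0] :
    Module.finrank k (Module.End.eigenspace f μ0) =
      (Finset.univ.filter fun i => d i = μ0).card := by
  rw [eigenspace_diag B f d h μ0]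
  have himg : ⇑B '' {i | d i = μ0} = Set.range (⇑B ∘ (Subtype.val : {i // d i = μ0} → ι)) := by
    rw [Set.range_comp, Subtype.range_coe_subtype]
  rw [himg, finrank_span_eq_card (B.linearIndependent.comp _ Subtype.val_injective)]
  simp [Fintype.card_subtype]

variable {k W : Type*} [Field k] [AddCommGroup W] [Module k W]

section
variable {ι : Type*} [Fintype ι] [LinearOrder ι]

noncomputable def extL (b : Basis ι k W) :
    (W ⊗[k] W) →ₗ[k] ({p : ι × ι // p.1 < p.2} → k) :=
  LinearMap.pi fun p =>
    (Finsupp.lapply (p.val.1, p.val.2)).comp (b.tensorProduct b).repr.toLinearMap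
    - (Finsupp.lapply (p.val.2, p.val.1)).comp (b.tensorProduct b).repr.toLinearMap

lemma extL_apply (b : Basis ι k W) (t : W ⊗[k] W) (p : {p : ι × ι // p.1 < p.2}) :
    extL b t p = (b.tensorProduct b).repr t (p.val.1, p.val.2)
      - (b.tensorProduct b).repr t (p.val.2, p.val.1) := rfl

lemma sqT_le_ker_extL (b : Basis ι k W) : sqT k W ≤ LinearMap.ker (extL b) := by
  rw [sqT, Submodule.span_le]
  rintro _ ⟨x, rfl⟩
  rw [SetLike.mem_coe, LinearMap.mem_ker]
  funext p
  rw [extL_apply]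
  simp only [Basis.tensorProduct_repr_tmul_apply, smul_eq_mul, Pi.zero_apply]
  ring

noncomputable def eQ (b : Basis ι k W) (p : {p : ι × ι // p.1 < p.2}) :
    (W ⊗[k] W) ⧸ sqT k W :=
  (sqT k W).mkQ (b p.val.1 ⊗ₜ[k] b p.val.2)

lemma extL_eQ (b : Basis ι k W) (q p : {p : ι × ι // p.1 < p.2}) :
    (sqT k W).liftQ (extL b) (sqT_le_ker_extL b) (eQ b q) = Pi.single q 1 := by
  funext p'
  rw [eQ, Submodule.mkQ_apply, Submodule.liftQ_apply, extL_apply]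
  have hb : ∀ (i j : ι) (q : ι × ι),
      (b.tensorProduct b).repr (b i ⊗ₜ[k] b j) q = if q = (i, j) then 1 else 0 := by
    intro i j q
    have : b i ⊗ₜ[k] b j = (b.tensorProduct b) (i, j) := (Basis.tensorProduct_apply' b b (i,j)).symm
    rw [this, Basis.repr_self, Finsupp.single_apply]
    simp [eq_comm]
  rw [hb, hb]
  have h1 : ((p'.val.2, p'.val.1) = (q.val.1, q.val.2)) = False := by
    simp only [eq_iff_iff, iff_false]
    intro h
    have h2 := congrArg Prod.fst h
    have h3 := congrArg Prod.snd h
    simp at h2 h3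
    have := p'.property
    rw [h2, h3] at this
    exact absurd q.property (not_lt.mpr this.le)
  simp only [h1, if_false, sub_zero]
  by_cases h : p' = q
  · subst h; simp
  · have : ((p'.val.1, p'.val.2) = (q.val.1, q.val.2)) = False := by
      simp only [eq_iff_iff, iff_false]
      intro hh
      apply h
      apply Subtype.ext
      have := Prod.ext_iff.mp hh
      exact Prod.ext this.1 this.2
    simp only [this, if_false, Pi.single_apply, if_neg h]

lemma eQ_indep (b : Basis ι k W) : LinearIndependent k (eQ b) := by
  apply LinearIndependent.of_comp ((sqT k W).liftQ (extL b) (sqT_le_ker_extL b))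
  have : (⇑((sqT k W).liftQ (extL b) (sqT_le_ker_extL b)) ∘ eQ b)
      = fun q => Pi.single q (1:k) := by
    funext q
    exact extL_eQ b q q
  rw [this]
  have h2 : (fun q => Pi.single q (1:k)) = ⇑(Pi.basisFun k {p : ι × ι // p.1 < p.2}) :=
    funext fun q => (Pi.basisFun_apply k _ q).symm
  rw [h2]
  exact (Pi.basisFun k {p : ι × ι // p.1 < p.2}).linearIndependent

lemma mk_sq_zero (x : W) : (sqT k W).mkQ (x ⊗ₜ[k] x) = 0 := by
  rw [Submodule.mkQ_apply, Submodule.Quotient.mk_eq_zero]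
  exact Submodule.subset_span ⟨x, rfl⟩

lemma mk_basis_mem (b : Basis ι k W) (i j : ι) :
    (sqT k W).mkQ (b i ⊗ₜ[k] b j) ∈ Submodule.span k (Set.range (eQ b)) := by
  rcases lt_trichotomy i j with h | h | h
  · exact Submodule.subset_span ⟨⟨(i, j), h⟩, rfl⟩
  · subst h
    rw [mk_sq_zero]
    exact Submodule.zero_mem _
  · have hsum : (sqT k W).mkQ (b i ⊗ₜ[k] b j) + (sqT k W).mkQ (b j ⊗ₜ[k] b i) = 0 := by
      rw [← map_add]
      have hexp : b i ⊗ₜ[k] b j + b j ⊗ₜ[k] b i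
          = (b i + b j) ⊗ₜ[k] (b i + b j) - b i ⊗ₜ[k] b i - b j ⊗ₜ[k] b j := by
        rw [TensorProduct.add_tmul, TensorProduct.tmul_add, TensorProduct.tmul_add]
        abel
      rw [hexp, map_sub, map_sub, mk_sq_zero, mk_sq_zero, mk_sq_zero]
      abel
    have : (sqT k W).mkQ (b i ⊗ₜ[k] b j) = -(sqT k W).mkQ (b j ⊗ₜ[k] b i) := by
      linear_combination (norm := abel) hsum
    rw [this]
    exact Submodule.neg_mem _ (Submodule.subset_span ⟨⟨(j, i), h⟩, rfl⟩)

lemma eQ_span (b : Basis ι k W) :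
    ⊤ ≤ Submodule.span k (Set.range (eQ b)) := by
  intro x _
  obtain ⟨t, rfl⟩ := (sqT k W).mkQ_surjective x
  have ht : t ∈ Submodule.span k (Set.range (b.tensorProduct b)) := by
    rw [Basis.span_eq]; trivial
  induction ht using Submodule.span_induction with
  | mem z hz =>
    obtain ⟨⟨i, j⟩, rfl⟩ := hz
    rw [Basis.tensorProduct_apply']
    exact mk_basis_mem b i j
  | zero => rw [map_zero]; exact Submodule.zero_mem _
  | add y z _ _ hy hz => rw [map_add]; exact Submodule.add_mem _ (hy trivial) (hz trivial)
  | smul c y _ hy => rw [map_smul]; exact Submodule.smul_mem _ c (hy trivial)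

noncomputable def extBasis (b : Basis ι k W) :
    Basis {p : ι × ι // p.1 < p.2} k ((W ⊗[k] W) ⧸ sqT k W) :=
  Basis.mk (eQ_indep b) (eQ_span b)

lemma extBasis_apply (b : Basis ι k W) (p : {p : ι × ι // p.1 < p.2}) :
    extBasis b p = (sqT k W).mkQ (b p.val.1 ⊗ₜ[k] b p.val.2) := by
  rw [extBasis, Basis.mk_apply, eQ]

lemma extSqMap_diag (b : Basis ι k W) (s : W →ₗ[k] W) (a : ι → k)
    (hb : ∀ x, s (b x) = a x • b x) (p : {p : ι × ι // p.1 < p.2}) :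
    extSqMap s (extBasis b p) = (a p.val.1 * a p.val.2) • extBasis b p := by
  rw [extBasis_apply]
  have key : ∀ x, extSqMap s ((sqT k W).mkQ x) = (sqT k W).mkQ (TensorProduct.map s s x) :=
    fun x => rfl
  rw [key, Submodule.mkQ_apply, Submodule.mkQ_apply,
    TensorProduct.map_tmul, hb, hb]
  have hsw : (a p.val.1 • b p.val.1) ⊗ₜ[k] (a p.val.2 • b p.val.2)
      = (a p.val.1 * a p.val.2) • (b p.val.1 ⊗ₜ[k] b p.val.2) := by
    rw [TensorProduct.tmul_smul, TensorProduct.smul_tmul', smul_smul, mul_comm (a p.val.2), ← TensorProduct.smul_tmul']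
  rw [hsw, ← Submodule.Quotient.mk_smul]
end

end Part1

section Part2
open Finset

section comb
variable {k : Type*} [Field k] [DecidableEq k]

lemma handshake {N : ℕ} (P : Fin (2*ℓ+1) → Fin (2*ℓ+1) → Prop) [DecidableRel P]
    (hsymm : ∀ x y, P x y → P y x) :
    2 * (univ.filter fun p : Fin (2*ℓ+1) × Fin (2*ℓ+1) => p.1 < p.2 ∧ P p.1 p.2).card
      = (univ.filter fun p : Fin (2*ℓ+1) × Fin (2*ℓ+1) => p.1 ≠ p.2 ∧ P p.1 p.2).card := by
  have hsplit : (univ.filter fun p : Fin (2*ℓ+1) × Fin (2*ℓ+1) => p.1 ≠ p.2 ∧ P p.1 p.2)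
      = (univ.filter fun p : Fin (2*ℓ+1) × Fin (2*ℓ+1) => p.1 < p.2 ∧ P p.1 p.2)
        ∪ (univ.filter fun p : Fin (2*ℓ+1) × Fin (2*ℓ+1) => p.2 < p.1 ∧ P p.1 p.2) := by
    rw [← Finset.filter_or]
    apply Finset.filter_congr
    intro p _
    constructor
    · rintro ⟨hne, hP⟩
      rcases lt_or_gt_of_ne hne with h | h
      · exact Or.inl ⟨h, hP⟩
      · exact Or.inr ⟨h, hP⟩
    · rintro (⟨h, hP⟩ | ⟨h, hP⟩)
      · exact ⟨ne_of_lt h, hP⟩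
      · exact ⟨ne_of_gt h, hP⟩
  have hdisj : Disjoint (univ.filter fun p : Fin (2*ℓ+1) × Fin (2*ℓ+1) => p.1 < p.2 ∧ P p.1 p.2)
      (univ.filter fun p : Fin (2*ℓ+1) × Fin (2*ℓ+1) => p.2 < p.1 ∧ P p.1 p.2) := by
    rw [Finset.disjoint_filter]
    rintro p _ ⟨h1, _⟩ ⟨h2, _⟩
    exact absurd h2 (not_lt.mpr h1.le)
  have hcardeq : (univ.filter fun p : Fin (2*ℓ+1) × Fin (2*ℓ+1) => p.2 < p.1 ∧ P p.1 p.2).card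
      = (univ.filter fun p : Fin (2*ℓ+1) × Fin (2*ℓ+1) => p.1 < p.2 ∧ P p.1 p.2).card := by
    apply Finset.card_bij (fun p _ => p.swap)
    · rintro p hp
      simp only [mem_filter, mem_univ, true_and] at hp ⊢
      exact ⟨hp.1, hsymm _ _ hp.2⟩
    · rintro p _ q _ h
      exact Prod.swap_injective h
    · rintro p hp
      simp only [mem_filter, mem_univ, true_and] at hp
      exact ⟨p.swap, by simp only [mem_filter, mem_univ, true_and, Prod.fst_swap,
        Prod.snd_swap]; exact ⟨hp.1, hsymm _ _ hp.2⟩, by simp⟩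
  rw [hsplit, Finset.card_union_of_disjoint hdisj, hcardeq, two_mul]

lemma fiberwise {N : ℕ} (Q : Fin (2*ℓ+1) → Fin (2*ℓ+1) → Prop) [DecidableRel Q] :
    (univ.filter fun p : Fin (2*ℓ+1) × Fin (2*ℓ+1) => Q p.1 p.2).card
      = ∑ x : Fin (2*ℓ+1), (univ.filter fun y => Q x y).card := by
  rw [Finset.card_filter, Fintype.sum_prod_type]
  exact Finset.sum_congr rfl fun x _ => (Finset.card_filter _ _).symm

lemma comb_main {ℓ : ℕ} (hl : 3 ≤ ℓ) (a : Fin (2 * ℓ + 1) → k)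
    (ha0 : ∀ x, a x ≠ 0) (x1 x2 : Fin (2 * ℓ + 1)) (h1 : a x1 = 1) (h2 : a x2 ≠ 1)
    (μ0 : k) :
    (univ.filter fun p : Fin (2*ℓ+1) × Fin (2*ℓ+1) =>
        p.1 < p.2 ∧ a p.1 * a p.2 = μ0).card ≤ 2 * ℓ ^ 2 - ℓ ∧
    ((univ.filter fun p : Fin (2*ℓ+1) × Fin (2*ℓ+1) =>
        p.1 < p.2 ∧ a p.1 * a p.2 = μ0).card = 2 * ℓ ^ 2 - ℓ →
      ∃ v : k, v * v = μ0 ∧ (univ.filter fun x => a x = v).card = 2 * ℓ) := by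
  set G := (univ.filter fun p : Fin (2*ℓ+1) × Fin (2*ℓ+1) => p.1 < p.2 ∧ a p.1 * a p.2 = μ0).card with hG
  set bad := (univ.filter fun p : Fin (2*ℓ+1) × Fin (2*ℓ+1) => p.1 ≠ p.2 ∧ a p.1 * a p.2 ≠ μ0).card with hB
  -- step A : 2 * G + bad = 4ℓ² + 2ℓ
  have hstepA : 2 * G + bad = 4 * ℓ ^ 2 + 2 * ℓ := by
    have hh := handshake (N := 2*ℓ+1) (fun x y => a x * a y = μ0)
      (fun x y h => by rw [← h]; ring)
    have hsum : (univ.filter fun p : Fin (2*ℓ+1) × Fin (2*ℓ+1) => p.1 ≠ p.2 ∧ a p.1 * a p.2 = μ0).card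
        + bad = (univ.filter fun p : Fin (2*ℓ+1) × Fin (2*ℓ+1) => p.1 ≠ p.2).card := by
      rw [hB]
      have e1 : ∀ (Q : Fin (2*ℓ+1) × Fin (2*ℓ+1) → Prop) [DecidablePred Q],
          (univ.filter fun p : Fin (2*ℓ+1) × Fin (2*ℓ+1) => p.1 ≠ p.2 ∧ Q p)
            = (univ.filter fun p : Fin (2*ℓ+1) × Fin (2*ℓ+1) => p.1 ≠ p.2).filter Q := by
        intro Q _
        rw [Finset.filter_filter]
      rw [e1 (fun p => a p.1 * a p.2 = μ0), e1 (fun p => a p.1 * a p.2 ≠ μ0)]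
      exact Finset.card_filter_add_card_filter_not _
    have hne : (univ.filter fun p : Fin (2*ℓ+1) × Fin (2*ℓ+1) => p.1 ≠ p.2).card = (2*ℓ+1) * (2*ℓ+1) - (2*ℓ+1) := by
      have : (univ.filter fun p : Fin (2*ℓ+1) × Fin (2*ℓ+1) => p.1 ≠ p.2)
          = (univ : Finset (Fin (2*ℓ+1))).offDiag := by
        ext p; simp [Finset.mem_offDiag]
      rw [this, Finset.offDiag_card, Finset.card_univ, Fintype.card_fin]
    have hNsq : (2*ℓ+1) * (2*ℓ+1) - (2*ℓ+1) = 4 * ℓ ^ 2 + 2 * ℓ := by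
      have : (2*ℓ+1) * (2*ℓ+1) = (4 * ℓ ^ 2 + 2 * ℓ) + (2*ℓ+1) := by ring
      rw [this, Nat.add_sub_cancel]
    rw [← hh] at hsum
    rw [hsum, hne, hNsq]
  -- step B
  have hstepB : 4 * ℓ ≤ bad ∧ (bad ≤ 4 * ℓ →
      ∃ v : k, v * v = μ0 ∧ (univ.filter fun x => a x = v).card = 2 * ℓ) := by
    by_cases hbig : ∃ v : k, 2 * ℓ ≤ (univ.filter fun x => a x = v).card + 1
    · obtain ⟨v, hv⟩ := hbig
      set V := univ.filter fun x => a x = v with hV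
      have hvle : V.card ≤ 2 * ℓ := by
        by_contra hcon
        push_neg at hcon
        have hle : V.card ≤ 2*ℓ+1 := by
          calc V.card ≤ (univ : Finset (Fin (2*ℓ+1))).card := Finset.card_filter_le _ _
          _ = 2*ℓ+1 := by rw [Finset.card_univ, Fintype.card_fin]
        have hcard : V.card = Fintype.card (Fin (2*ℓ+1)) := by
          rw [Fintype.card_fin]; omega
        have huniv : V = univ := Finset.eq_univ_of_card _ hcard
        have hx1 : x1 ∈ V := huniv ▸ Finset.mem_univ x1
        have hx2 : x2 ∈ V := huniv ▸ Finset.mem_univ x2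
        rw [hV, Finset.mem_filter] at hx1 hx2
        exact h2 (hx2.2.trans (hx1.2.symm.trans h1))
      have hvpos : 1 ≤ V.card := by omega
      have hv0 : v ≠ 0 := by
        obtain ⟨x, hx⟩ := Finset.card_pos.mp hvpos
        rw [hV, Finset.mem_filter] at hx
        exact hx.2 ▸ ha0 x
      set O := univ.filter fun x => a x ≠ v with hO
      have hVO : V.card + O.card = 2*ℓ+1 := by
        rw [hV, hO]
        have := Finset.card_filter_add_card_filter_not
          (s := (univ : Finset (Fin (2*ℓ+1)))) (fun x => a x = v)
        rw [Finset.card_univ, Fintype.card_fin] at this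
        exact this
      by_cases hv2 : v * v = μ0
      · -- case 3
        have hsub : (V ×ˢ O) ∪ (O ×ˢ V)
            ⊆ univ.filter fun p : Fin (2*ℓ+1) × Fin (2*ℓ+1) => p.1 ≠ p.2 ∧ a p.1 * a p.2 ≠ μ0 := by
          intro p hp
          rw [Finset.mem_union, Finset.mem_product, Finset.mem_product] at hp
          simp only [hV, hO, Finset.mem_filter, Finset.mem_univ, true_and] at hp ⊢
          rcases hp with ⟨hp1, hp2⟩ | ⟨hp1, hp2⟩
          · refine ⟨fun h => hp2 (h ▸ hp1), fun h => hp2 ?_⟩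
            rw [hp1, ← hv2] at h
            exact mul_left_cancel₀ hv0 h
          · refine ⟨fun h => hp1 (h.symm ▸ hp2), fun h => hp1 ?_⟩
            rw [hp2, ← hv2] at h
            exact mul_right_cancel₀ hv0 h
        have hdisj : Disjoint (V ×ˢ O) (O ×ˢ V) := by
          rw [Finset.disjoint_left]
          rintro p hp hq
          rw [Finset.mem_product] at hp hq
          rw [hV, Finset.mem_filter] at hp
          rw [hO, Finset.mem_filter] at hq
          exact hq.1.2 hp.1.2
        have hcard2 : 2 * (V.card * O.card) ≤ bad := by
          rw [hB]
          calc 2 * (V.card * O.card)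
              = ((V ×ˢ O) ∪ (O ×ˢ V)).card := by
                rw [Finset.card_union_of_disjoint hdisj, Finset.card_product,
                  Finset.card_product]
                ring
          _ ≤ _ := Finset.card_le_card hsub
        have hOcard : O.card = 1 ∨ O.card = 2 := by omega
        rcases hOcard with hOc | hOc
        · have hVc : V.card = 2 * ℓ := by omega
          constructor
          · calc 4 * ℓ = 2 * (V.card * O.card) := by rw [hVc, hOc]; ring
            _ ≤ bad := hcard2
          · intro _
            exact ⟨v, hv2, hVc⟩
        · have hVc : V.card = 2 * ℓ - 1 := by omega
          have hbig2 : 4 * ℓ + 1 ≤ bad := by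
            have : 2 * (V.card * O.card) = 8 * ℓ - 4 := by
              rw [hVc, hOc]
              have h3 : 2 * ℓ - 1 = 2 * ℓ - 1 := rfl
              omega
            omega
          exact ⟨by omega, fun h => absurd h (by omega)⟩
      · -- case 2 : v * v ≠ μ0
        have hsub : V.offDiag
            ⊆ univ.filter fun p : Fin (2*ℓ+1) × Fin (2*ℓ+1) => p.1 ≠ p.2 ∧ a p.1 * a p.2 ≠ μ0 := by
          intro p hp
          rw [Finset.mem_offDiag] at hp
          obtain ⟨hp1, hp2, hp3⟩ := hp
          rw [hV, Finset.mem_filter] at hp1 hp2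
          simp only [Finset.mem_filter, Finset.mem_univ, true_and]
          exact ⟨hp3, by rw [hp1.2, hp2.2]; exact hv2⟩
        have hcard2 : V.card * V.card - V.card ≤ bad := by
          rw [hB, ← Finset.offDiag_card]
          exact Finset.card_le_card hsub
        have h5 : 5 ≤ V.card := by omega
        have hXX : 5 * V.card ≤ V.card * V.card :=
          Nat.mul_le_mul_right _ h5
        have hbig2 : 4 * ℓ + 1 ≤ bad := by
          have h4X : 4 * V.card ≤ V.card * V.card - V.card := by omega
          have : 4 * ℓ + 1 ≤ 4 * V.card := by omega
          omega
        exact ⟨by omega, fun h => absurd h (by omega)⟩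
    · -- case 1 : all value counts small
      push_neg at hbig
      have hdeg : ∀ x : Fin (2*ℓ+1),
          2 ≤ (univ.filter fun y => x ≠ y ∧ a x * a y ≠ μ0).card := by
        intro x
        set S := univ.filter fun y => ¬(x ≠ y ∧ a x * a y ≠ μ0) with hS
        have hsub : S ⊆ insert x (univ.filter fun y => a y = (a x)⁻¹ * μ0) := by
          intro y hy
          rw [hS, Finset.mem_filter] at hy
          rw [not_and_or, not_ne_iff, not_ne_iff] at hy
          rcases hy.2 with h | h
          · exact h ▸ Finset.mem_insert_self _ _
          · apply Finset.mem_insert_of_mem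
            rw [Finset.mem_filter]
            refine ⟨Finset.mem_univ _, ?_⟩
            rw [← h, ← mul_assoc, inv_mul_cancel₀ (ha0 x), one_mul]
        have hScard : S.card ≤ 2 * ℓ - 1 := by
          have := hbig ((a x)⁻¹ * μ0)
          have h2 := Finset.card_le_card hsub
          have h3 := Finset.card_insert_le x (univ.filter fun y => a y = (a x)⁻¹ * μ0)
          omega
        have hpart := Finset.card_filter_add_card_filter_not
          (s := (univ : Finset (Fin (2*ℓ+1)))) (fun y => x ≠ y ∧ a x * a y ≠ μ0)
        rw [Finset.card_univ, Fintype.card_fin] at hpart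
        rw [← hS] at hpart
        omega
      have hfib := fiberwise (N := 2*ℓ+1) (fun x y : Fin (2*ℓ+1) => x ≠ y ∧ a x * a y ≠ μ0)
      have : 2 * (2*ℓ+1) ≤ bad := by
        rw [hB, hfib]
        calc 2 * (2*ℓ+1) = ∑ _x : Fin (2*ℓ+1), 2 := by
              rw [Finset.sum_const, Finset.card_univ, Fintype.card_fin, smul_eq_mul, mul_comm]
        _ ≤ _ := Finset.sum_le_sum (fun x _ => hdeg x)
      exact ⟨by omega, fun h => absurd h (by omega)⟩
  -- combine
  obtain ⟨hb1, hb2⟩ := hstepB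
  constructor
  · have h2G : 2 * G ≤ 4 * ℓ ^ 2 - 2 * ℓ := by omega
    have hll : ℓ ≤ ℓ ^ 2 := by nlinarith
    omega
  · intro hEq
    have hll : ℓ ≤ ℓ ^ 2 := by nlinarith
    have hbad : bad ≤ 4 * ℓ := by omega
    exact hb2 hbad
end comb

end Part2

/-- Let
`s = diag(μ₁·I_{n₁},…,μ_m·I_{n_m}, I_n, μ_m^{-1}·I_{n_m},…,μ₁^{-1}·I_{n₁})` be a
noncentral semisimple element of `SO_{2ℓ+1}(k)` (`char k ≠ 2`, `ℓ ≥ 3`, `μ_i ≠ μ_j^{±1}`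
for `i < j`, `μ_i ≠ 1`, `n + 2Σn_i = 2ℓ+1`).  Then every eigenspace of `s` on
`Λ²(k^{2ℓ+1})` has dimension at most `2ℓ² − ℓ`, with equality only for eigenvalue `1`
and `s` (up to conjugation) of the form `diag(−1,…,−1,1,−1,…,−1)`. -/
theorem stmt19 {k : Type*} [Field k] [IsAlgClosed k] (hk2 : (2 : k) ≠ 0)
    {W : Type*} [AddCommGroup W] [Module k W] [FiniteDimensional k W]
    (ℓ : ℕ) (hl : 3 ≤ ℓ) (hW : Module.finrank k W = 2 * ℓ + 1)
    (B : LinearMap.BilinForm k W) (hBnd : B.Nondegenerate)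
    (hBsymm : ∀ v w : W, B v w = B w v)
    (s : W →ₗ[k] W) (hs : ∀ v w, B (s v) (s w) = B v w)
    (m nn : ℕ) (hm : 1 ≤ m) (hnn : 1 ≤ nn)
    (μ : Fin m → k) (n : Fin m → ℕ)
    (hμ1 : ∀ i, μ i ≠ 1)
    (hμ : ∀ i j : Fin m, i < j → μ i ≠ μ j ∧ μ i ≠ (μ j)⁻¹)
    (hpos : ∀ i, 1 ≤ n i) (hsum : nn + 2 * ∑ i, n i = 2 * ℓ + 1)
    (b : Basis (Fin (2 * ℓ + 1)) k W) (a : Fin (2 * ℓ + 1) → k)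
    (hb : ∀ x, s (b x) = a x • b x)
    (hmult : Finset.univ.val.map a = nn • ({1} : Multiset k) +
      ∑ i : Fin m, ((n i) • ({μ i} : Multiset k) + (n i) • ({(μ i)⁻¹} : Multiset k))) :
    ∀ μ0 : k,
      Module.finrank k (Module.End.eigenspace (extSqMap s) μ0) ≤ 2 * ℓ ^ 2 - ℓ ∧
      (Module.finrank k (Module.End.eigenspace (extSqMap s) μ0) = 2 * ℓ ^ 2 - ℓ →
        μ0 = 1 ∧ Finset.univ.val.map a =
          (2 * ℓ) • ({(-1 : k)} : Multiset k) + ({1} : Multiset k)) := by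
  
  intro μ0
  classical
  have ha0 : ∀ x, a x ≠ 0 := by
    intro x hx
    have hzero : ∀ w, B (b x) w = 0 := by
      intro w
      have h := hs (b x) w
      rw [hb x, hx, zero_smul, map_zero, LinearMap.zero_apply] at h
      exact h.symm
    exact b.ne_zero x (hBnd.1 (b x) hzero)
  have hex1 : ∃ x, a x = 1 := by
    have hmem : (1 : k) ∈ Finset.univ.val.map a := by
      rw [hmult]
      refine Multiset.mem_add.mpr (Or.inl ?_)
      rw [Multiset.mem_nsmul]
      exact ⟨by omega, Multiset.mem_singleton_self 1⟩
    obtain ⟨x, _, hx⟩ := Multiset.mem_map.mp hmem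
    exact ⟨x, hx⟩
  have i0 : Fin m := ⟨0, hm⟩
  have hμmem : ∀ w : k, (∃ i : Fin m, w = μ i ∨ w = (μ i)⁻¹) → ∃ x, a x = w := by
    rintro w ⟨i, hi⟩
    have hnizero : n i ≠ 0 := by have := hpos i; omega
    have hmem : w ∈ Finset.univ.val.map a := by
      rw [hmult]
      refine Multiset.mem_add.mpr (Or.inr ?_)
      refine Multiset.mem_sum.mpr ⟨i, Finset.mem_univ i, ?_⟩
      rcases hi with h | h
      · exact Multiset.mem_add.mpr (Or.inl (Multiset.mem_nsmul.mpr
          ⟨hnizero, by rw [h]; exact Multiset.mem_singleton_self _⟩))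
      · exact Multiset.mem_add.mpr (Or.inr (Multiset.mem_nsmul.mpr
          ⟨hnizero, by rw [h]; exact Multiset.mem_singleton_self _⟩))
    obtain ⟨x, _, hx⟩ := Multiset.mem_map.mp hmem
    exact ⟨x, hx⟩
  obtain ⟨x1, hx1⟩ := hex1
  obtain ⟨x2, hx2⟩ := hμmem (μ i0) ⟨i0, Or.inl rfl⟩
  have hx2ne : a x2 ≠ 1 := by rw [hx2]; exact hμ1 i0
  -- finrank of the eigenspace equals the number of good pairs
  have hdiag := fun p => extSqMap_diag b s a hb p
  have hfr := finrank_eigenspace_diag (extBasis b) (extSqMap s)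
      (fun p => a p.val.1 * a p.val.2) hdiag μ0
  have hcard : (Finset.univ.filter fun q : {p : Fin (2*ℓ+1) × Fin (2*ℓ+1) // p.1 < p.2} =>
        a q.val.1 * a q.val.2 = μ0).card
      = (Finset.univ.filter fun p : Fin (2*ℓ+1) × Fin (2*ℓ+1) =>
          p.1 < p.2 ∧ a p.1 * a p.2 = μ0).card := by
    apply Finset.card_bij (fun q _ => q.val)
    · intro q hq
      rw [Finset.mem_filter] at hq ⊢
      exact ⟨Finset.mem_univ _, q.prop, hq.2⟩
    · intro q _ q' _ h
      exact Subtype.ext h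
    · intro p hp
      rw [Finset.mem_filter] at hp
      exact ⟨⟨p, hp.2.1⟩, Finset.mem_filter.mpr ⟨Finset.mem_univ _, hp.2.2⟩, rfl⟩
  obtain ⟨hbound, hstruct⟩ := comb_main hl a ha0 x1 x2 hx1 hx2ne μ0
  have hfr2 : Module.finrank k (Module.End.eigenspace (extSqMap s) μ0)
      = (Finset.univ.filter fun p : Fin (2*ℓ+1) × Fin (2*ℓ+1) =>
          p.1 < p.2 ∧ a p.1 * a p.2 = μ0).card := by
    rw [hfr, ← hcard]
  rw [hfr2]
  refine ⟨hbound, fun hEq => ?_⟩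
  obtain ⟨v, hv2, hcnt⟩ := hstruct hEq
  -- relate multiset counts with filter cardinalities
  have hcount : ∀ w : k, Multiset.count w (Finset.univ.val.map a)
      = (Finset.univ.filter fun x => a x = w).card := by
    intro w
    rw [Multiset.count_map]
    have h1 : (Finset.univ.filter fun x => a x = w).card
        = Multiset.card (Multiset.filter (fun x => a x = w) Finset.univ.val) := rfl
    rw [h1]
    congr 1
    apply Multiset.filter_congr
    intro x _
    exact eq_comm
  have hcount1 : Multiset.count 1 (Finset.univ.val.map a) = nn := by
    rw [hmult, Multiset.count_add, Multiset.count_nsmul, Multiset.count_singleton,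
      if_pos rfl, mul_one]
    have hz : Multiset.count 1 (∑ i : Fin m,
        ((n i) • ({μ i} : Multiset k) + (n i) • ({(μ i)⁻¹} : Multiset k))) = 0 := by
      rw [Multiset.count_sum']
      apply Finset.sum_eq_zero
      intro i _
      rw [Multiset.count_add, Multiset.count_nsmul, Multiset.count_nsmul,
        Multiset.count_singleton, Multiset.count_singleton,
        if_neg (fun h => hμ1 i h.symm), if_neg (fun h => hμ1 i (inv_eq_one.mp h.symm))]
      ring
    rw [hz, add_zero]
  have hvne1 : v ≠ 1 := by
    intro hveq
    have h1 : Multiset.count 1 (Finset.univ.val.map a) = 2 * ℓ := by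
      rw [hcount 1, ← hveq, hcnt]
    omega
  have hdisj : Disjoint (Finset.univ.filter fun x => a x = v)
      (Finset.univ.filter fun x => a x = (1:k)) := by
    rw [Finset.disjoint_left]
    intro x hxv hx1'
    rw [Finset.mem_filter] at hxv hx1'
    exact hvne1 (hxv.2.symm.trans hx1'.2)
  have hunle : (Finset.univ.filter fun x => a x = v).card
      + (Finset.univ.filter fun x => a x = (1:k)).card ≤ 2 * ℓ + 1 := by
    rw [← Finset.card_union_of_disjoint hdisj]
    calc ((Finset.univ.filter fun x => a x = v)
          ∪ (Finset.univ.filter fun x => a x = (1:k))).card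
        ≤ (Finset.univ : Finset (Fin (2*ℓ+1))).card :=
          Finset.card_le_card (Finset.subset_univ _)
      _ = 2 * ℓ + 1 := by rw [Finset.card_univ, Fintype.card_fin]
  have hc1pos : 1 ≤ (Finset.univ.filter fun x => a x = (1:k)).card := by
    apply Finset.card_pos.mpr
    exact ⟨x1, Finset.mem_filter.mpr ⟨Finset.mem_univ _, hx1⟩⟩
  have hc1 : (Finset.univ.filter fun x => a x = (1:k)).card = 1 := by omega
  have huniv : (Finset.univ.filter fun x => a x = v)
      ∪ (Finset.univ.filter fun x => a x = (1:k)) = Finset.univ := by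
    apply Finset.eq_univ_of_card
    rw [Finset.card_union_of_disjoint hdisj, hcnt, hc1, Fintype.card_fin]
  have hval : ∀ x, a x = v ∨ a x = 1 := by
    intro x
    have hx := huniv ▸ Finset.mem_univ x
    rw [Finset.mem_union, Finset.mem_filter, Finset.mem_filter] at hx
    tauto
  have hμ1v : μ i0 = v := by
    rcases hval x2 with h | h
    · exact hx2 ▸ h
    · exact absurd (hx2 ▸ h) (hμ1 i0)
  obtain ⟨x3, hx3⟩ := hμmem ((μ i0)⁻¹) ⟨i0, Or.inr rfl⟩
  have hμinv : (μ i0)⁻¹ = v := by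
    rcases hval x3 with h | h
    · exact hx3 ▸ h
    · exact absurd (inv_eq_one.mp (hx3 ▸ h)) (hμ1 i0)
  have hμ0ne : μ i0 ≠ 0 := hx2 ▸ ha0 x2
  have hvv1 : v * v = 1 := by
    have h := mul_inv_cancel₀ hμ0ne
    rw [hμinv] at h
    rw [hμ1v] at h
    exact h
  have hμ0eq1 : μ0 = 1 := by rw [← hv2, hvv1]
  have hvm1 : v = -1 := by
    have hfact : (v - 1) * (v + 1) = 0 := by linear_combination hvv1
    rcases mul_eq_zero.mp hfact with h | h
    · exact absurd (by linear_combination h) hvne1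
    · linear_combination h
  have hm1ne1 : (1:k) ≠ -1 := by
    intro h
    exact hk2 (by linear_combination h)
  refine ⟨hμ0eq1, ?_⟩
  apply Multiset.ext.mpr
  intro w
  rw [Multiset.count_add, Multiset.count_nsmul, Multiset.count_singleton,
    Multiset.count_singleton, hcount]
  by_cases hw1 : w = 1
  · subst hw1
    rw [if_neg hm1ne1, if_pos rfl, hc1, mul_zero, zero_add]
  · by_cases hwv : w = -1
    · subst hwv
      rw [if_pos rfl, if_neg (fun h => hw1 h), mul_one, add_zero, ← hvm1, hcnt]
    · rw [if_neg hwv, if_neg hw1, mul_zero, add_zero]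
      apply Finset.card_eq_zero.mpr
      rw [Finset.filter_eq_empty_iff]
      intro x _
      rcases hval x with h | h
      · rw [h, hvm1]; exact fun hh => hwv hh.symm
      · rw [h]; exact fun hh => hw1 hh.symm
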